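/- Let m, k, n, d ∈ ℕ with 1 ≤ k < n/2. If n · 2^{−m−4} ≥ m · 2^m · log(2^{m+3} d) + log( 2 n^k / (k−1)! ), then there exists a multiset 𝕏 ⊂ 𝕄_m^d of cardinality n such that every axis-parallel box B ⊂ [0,1]^d with vol_d(B) > 2^{−m} satisfies #(𝕏 ∩ B) > k; in particular k-dispₘ(𝕏,d) ≤ 2^{−m}. -/

import Mathlib

open MeasureTheory Finset
open scoped Classical

noncomputable section

/-- The `k`-dispersion of a finite point set `P ⊆ [0,1]^d`: the supremum of the volumes of
axis-parallel boxes inside `[0,1]^d` containing at most `k` points of `P`. -/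
def kdisp (d k : ℕ) (P : Finset (Fin d → ℝ)) : ℝ :=
  sSup { v : ℝ | ∃ a b : Fin d → ℝ,
    (∀ i, 0 ≤ a i ∧ a i ≤ b i ∧ b i ≤ 1) ∧
    (P.filter (fun x => ∀ i, x i ∈ Set.Ioo (a i) (b i))).card ≤ k ∧
    v = ∏ i, (b i - a i) }

/-- The minimal `k`-dispersion over all `n`-point subsets of `[0,1]^d`. -/
def kdispStar (d k n : ℕ) : ℝ :=
  sInf { v : ℝ | ∃ P : Finset (Fin d → ℝ),
    (∀ x ∈ P, ∀ i, x i ∈ Set.Icc (0:ℝ) 1) ∧ P.card = n ∧ v = kdisp d k P }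

/-- The `k`-dispersion of a multiset `X` of points of `[0,1]^d`, points being counted
with multiplicity. -/
def kdispM (d k : ℕ) (X : Multiset (Fin d → ℝ)) : ℝ :=
  sSup { v : ℝ | ∃ a b : Fin d → ℝ,
    (∀ i, 0 ≤ a i ∧ a i ≤ b i ∧ b i ≤ 1) ∧
    Multiset.card (X.filter (fun x => ∀ i, x i ∈ Set.Ioo (a i) (b i))) ≤ k ∧
    v = ∏ i, (b i - a i) }

/-- The minimal multiset `k`-dispersion over all multisets of total multiplicity `n`
in `[0,1]^d`. -/
def kdispMStar (d k n : ℕ) : ℝ :=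
  sInf { v : ℝ | ∃ X : Multiset (Fin d → ℝ),
    (∀ x ∈ X, ∀ i, x i ∈ Set.Icc (0:ℝ) 1) ∧ Multiset.card X = n ∧ v = kdispM d k X }

/-- The one-dimensional mesh `𝕄_m = {1/2^m, 2/2^m, …, (2^m-1)/2^m}`. -/
def Mgrid (m : ℕ) : Finset ℝ := (Finset.Icc 1 (2 ^ m - 1)).image fun j : ℕ => (j : ℝ) / 2 ^ m

/-- The mesh `𝕄_m^d`. -/
def Ggrid (m d : ℕ) : Finset (Fin d → ℝ) := Fintype.piFinset fun _ => Mgrid m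

/-- `I` is a subinterval of `[0,1]`. -/
def IsIntervalIn01 (I : Set ℝ) : Prop := I ⊆ Set.Icc 0 1 ∧ I.OrdConnected

/-- Membership of the axis-parallel box `∏_ℓ I ℓ` in the family `Ω_m(s,p)`: the box has
volume exceeding `2^{-m}`, and for every coordinate `ℓ` one has
`s ℓ / 2^m < vol(I ℓ) ≤ (s ℓ + 1)/2^m` and `inf (I ℓ) ∈ [p ℓ - 2^{-m}, p ℓ)`. -/
def memOmega (m : ℕ) {d : ℕ} (s : Fin d → ℕ) (p : Fin d → ℝ) (I : Fin d → Set ℝ) : Prop :=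
  (∀ ℓ, IsIntervalIn01 (I ℓ)) ∧
  ((2:ℝ) ^ m)⁻¹ < (volume (Set.pi Set.univ I)).toReal ∧
  ∀ ℓ, (s ℓ : ℝ) / 2 ^ m < (volume (I ℓ)).toReal ∧
    (volume (I ℓ)).toReal ≤ ((s ℓ : ℝ) + 1) / 2 ^ m ∧
    sInf (I ℓ) ∈ Set.Ico (p ℓ - ((2:ℝ) ^ m)⁻¹) (p ℓ)

/-- `(s,p)` is an admissible index pair, i.e. `(s,p) ∈ 𝕀_m`: the parameters lie in the
allowed ranges and `Ω_m(s,p) ≠ ∅`. -/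
def memIm (m : ℕ) {d : ℕ} (s : Fin d → ℕ) (p : Fin d → ℝ) : Prop :=
  (∀ ℓ, s ℓ < 2 ^ m) ∧
  (∀ ℓ, ∃ j : ℕ, 1 ≤ j ∧ j ≤ 2 ^ m - 1 ∧ p ℓ = (j : ℝ) / 2 ^ m) ∧
  ∃ I, memOmega m s p I

/-- Membership of `z` in the box `𝔹_m(s,p) = ∏_ℓ [p ℓ, p ℓ + (s ℓ - 1)/2^m]`. -/
def memBox (m : ℕ) {d : ℕ} (s : Fin d → ℕ) (p : Fin d → ℝ) (z : Fin d → ℝ) : Prop :=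
  ∀ ℓ, z ℓ ∈ Set.Icc (p ℓ) (p ℓ + ((s ℓ : ℝ) - 1) / 2 ^ m)


namespace S8

def θ (m j : ℕ) : ℝ := (j : ℝ) / 2 ^ m

def Jgrid (m : ℕ) : Finset ℕ := Finset.Icc 1 (2 ^ m - 1)

def Afin (m d : ℕ) : Finset ((Fin d → ℕ) × (Fin d → ℕ)) :=
  ((Fintype.piFinset fun _ : Fin d => Jgrid m) ×ˢ (Fintype.piFinset fun _ : Fin d => Jgrid m)).filter
    (fun c => (∀ ℓ, c.1 ℓ ≤ c.2 ℓ) ∧ 2 ^ (m * (d - 1)) < ∏ ℓ, (c.2 ℓ - c.1 ℓ + 2))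

def Cbox (m : ℕ) {d : ℕ} (c : (Fin d → ℕ) × (Fin d → ℕ)) : Finset (Fin d → ℝ) :=
  Fintype.piFinset fun ℓ => (Finset.Icc (c.1 ℓ) (c.2 ℓ)).image (θ m)

lemma theta_inj (m : ℕ) : Function.Injective (θ m) := by
  intro a b hab
  have h2 : (0:ℝ) < 2 ^ m := by positivity
  have : (a:ℝ) = b := by
    rw [θ, θ, div_left_inj' (ne_of_gt h2)] at hab; exact_mod_cast hab
  exact_mod_cast this

lemma Mgrid_eq (m : ℕ) : Mgrid m = (Jgrid m).image (θ m) := rfl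

lemma card_Mgrid (m : ℕ) : (Mgrid m).card = 2 ^ m - 1 := by
  rw [Mgrid_eq, Finset.card_image_of_injective _ (theta_inj m), Jgrid, Nat.card_Icc]
  omega

lemma card_Ggrid (m d : ℕ) : (Ggrid m d).card = (2 ^ m - 1) ^ d := by
  simp [Ggrid, Fintype.card_piFinset, card_Mgrid]





lemma Cbox_subset {m d : ℕ} {c : (Fin d → ℕ) × (Fin d → ℕ)} (hc : c ∈ Afin m d) :
    Cbox m c ⊆ Ggrid m d := by
  simp only [Afin, Finset.mem_filter, Finset.mem_product, Fintype.mem_piFinset] at hc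
  apply Fintype.piFinset_subset
  intro ℓ
  apply Finset.image_subset_image
  intro j hj
  simp only [Finset.mem_Icc] at hj
  have h1 := hc.1.1 ℓ; have h2 := hc.1.2 ℓ
  simp only [Jgrid, Finset.mem_Icc] at h1 h2 ⊢
  omega

lemma card_Cbox {m d : ℕ} {c : (Fin d → ℕ) × (Fin d → ℕ)} (hc : c ∈ Afin m d) :
    (Cbox m c).card = ∏ ℓ, (c.2 ℓ - c.1 ℓ + 1) := by
  simp only [Afin, Finset.mem_filter] at hc
  rw [Cbox, Fintype.card_piFinset]
  refine Finset.prod_congr rfl fun ℓ _ => ?_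
  rw [Finset.card_image_of_injective _ (theta_inj m), Nat.card_Icc]
  have := hc.2.1 ℓ
  omega

lemma sum_sub_one_le_prod_sub_one {ι : Type*} (s : Finset ι) (x : ι → ℝ)
    (h : ∀ i ∈ s, 1 ≤ x i) : ∑ i ∈ s, (x i - 1) ≤ ∏ i ∈ s, x i - 1 := by
  induction s using Finset.cons_induction with
  | empty => simp
  | cons a s ha ih =>
    rw [Finset.sum_cons, Finset.prod_cons]
    have h1 : 1 ≤ x a := h a (Finset.mem_cons_self a s)
    have h2 : ∀ i ∈ s, 1 ≤ x i := fun i hi => h i (Finset.mem_cons_of_mem hi)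
    have h3 := ih h2
    have h4 : (1:ℝ) ≤ ∏ i ∈ s, x i := by
      calc (1:ℝ) = ∏ i ∈ s, 1 := by simp
      _ ≤ ∏ i ∈ s, x i := Finset.prod_le_prod (by simp) h2
    nlinarith [mul_le_mul_of_nonneg_left h4 (by linarith : (0:ℝ) ≤ x a - 1)]

-- density lemma
lemma density {d m : ℕ} (hd : 1 ≤ d) (u : Fin d → ℝ)
    (h2 : ∀ ℓ, 2 ≤ u ℓ) (hub : ∀ ℓ, u ℓ ≤ 2 ^ m)
    (hprod : (2:ℝ) ^ (m * (d - 1)) ≤ ∏ ℓ, u ℓ) :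
    ((2:ℝ) ^ m - 1) ^ d ≤ 8 * 2 ^ m * ∏ ℓ, (u ℓ - 1) := by
  have hM : (1:ℝ) ≤ 2 ^ m := one_le_pow₀ one_le_two
  have hMpos : (0:ℝ) < 2 ^ m := by positivity
  set x : Fin d → ℝ := fun ℓ => 2 ^ m / u ℓ with hx
  have hupos : ∀ ℓ, (0:ℝ) < u ℓ := fun ℓ => lt_of_lt_of_le two_pos (h2 ℓ)
  have hx1 : ∀ ℓ, 1 ≤ x ℓ := fun ℓ => (one_le_div (hupos ℓ)).2 (hub ℓ)
  have hprodpos : (0:ℝ) < ∏ ℓ, u ℓ := Finset.prod_pos fun ℓ _ => hupos ℓ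
  have hxprod : ∏ ℓ, x ℓ ≤ 2 ^ m := by
    rw [hx]
    rw [Finset.prod_div_distrib, Finset.prod_const, Finset.card_univ, Fintype.card_fin]
    rw [div_le_iff₀ hprodpos]
    have hmd : m * d = m + m * (d - 1) := by
      conv_lhs => rw [show d = (d - 1) + 1 by omega]
      rw [Nat.mul_add]; ring
    calc ((2:ℝ) ^ m) ^ d = 2 ^ (m * d) := by rw [← pow_mul]
    _ = 2 ^ m * 2 ^ (m * (d-1)) := by rw [hmd, pow_add]
    _ ≤ 2 ^ m * ∏ ℓ, u ℓ := by
        exact mul_le_mul_of_nonneg_left hprod (le_of_lt hMpos)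
  have hsum : ∑ ℓ, (x ℓ - 1) ≤ 2 ^ m - 1 := by
    calc ∑ ℓ, (x ℓ - 1) ≤ ∏ ℓ, x ℓ - 1 :=
          sum_sub_one_le_prod_sub_one _ _ (fun i _ => hx1 i)
    _ ≤ 2 ^ m - 1 := by linarith
  set r : Fin d → ℝ := fun ℓ => 1 + (2 ^ m - u ℓ) / (2 ^ m * (u ℓ - 1)) with hr
  have key : ∀ ℓ, (2:ℝ) ^ m - 1 = (u ℓ - 1) * x ℓ * r ℓ := by
    intro ℓ
    have h1 : u ℓ ≠ 0 := ne_of_gt (hupos ℓ)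
    have h2' : u ℓ - 1 ≠ 0 := by have := h2 ℓ; intro h; nlinarith
    rw [hx, hr]
    field_simp
    ring
  have hrle : ∀ ℓ, r ℓ ≤ Real.exp (2 / 2 ^ m * (x ℓ - 1)) := by
    intro ℓ
    have hu2 := h2 ℓ
    have hub' := hub ℓ
    have hupos' := hupos ℓ
    have h1 : (2 ^ m - u ℓ) / (2 ^ m * (u ℓ - 1)) ≤ 2 / 2 ^ m * (x ℓ - 1) := by
      have hden : (0:ℝ) < 2 ^ m * (u ℓ - 1) := by nlinarith
      have hx' : 2 / 2 ^ m * (x ℓ - 1) = 2 * (2 ^ m - u ℓ) / (2 ^ m * u ℓ) := by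
        rw [hx]
        field_simp
        try ring
      rw [hx', div_le_div_iff₀ hden (by nlinarith : (0:ℝ) < 2 ^ m * u ℓ)]
      nlinarith [mul_nonneg (mul_nonneg (sub_nonneg.2 hub') hMpos.le)
        (by linarith : (0:ℝ) ≤ u ℓ - 2)]
    calc r ℓ ≤ 1 + 2 / 2 ^ m * (x ℓ - 1) := by rw [hr]; linarith
    _ ≤ Real.exp (2 / 2 ^ m * (x ℓ - 1)) := by
        have := Real.add_one_le_exp (2 / 2 ^ m * (x ℓ - 1)); linarith
  have hrprod : ∏ ℓ, r ℓ ≤ 8 := by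
    have h0 : ∀ ℓ ∈ univ, (0:ℝ) ≤ r ℓ := by
      intro ℓ _
      have : (0:ℝ) ≤ (2 ^ m - u ℓ) / (2 ^ m * (u ℓ - 1)) := by
        apply div_nonneg (by linarith [hub ℓ]) (by nlinarith [h2 ℓ])
      rw [hr]; dsimp only; linarith
    calc ∏ ℓ, r ℓ ≤ ∏ ℓ, Real.exp (2 / 2 ^ m * (x ℓ - 1)) :=
          Finset.prod_le_prod h0 (fun ℓ _ => hrle ℓ)
    _ = Real.exp (∑ ℓ, 2 / 2 ^ m * (x ℓ - 1)) := by rw [Real.exp_sum]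
    _ ≤ Real.exp 2 := by
        apply Real.exp_le_exp.2
        rw [← Finset.mul_sum]
        calc 2 / 2 ^ m * ∑ ℓ, (x ℓ - 1) ≤ 2 / 2 ^ m * (2 ^ m - 1) := by
              apply mul_le_mul_of_nonneg_left hsum (by positivity)
        _ ≤ 2 := by
            rw [div_mul_eq_mul_div, div_le_iff₀ hMpos]
            nlinarith
    _ ≤ 8 := by
        have h := Real.exp_one_lt_d9
        have : Real.exp 2 = Real.exp 1 * Real.exp 1 := by
          rw [← Real.exp_add]; norm_num
        nlinarith [Real.exp_pos 1]
  calc ((2:ℝ) ^ m - 1) ^ d = ∏ ℓ : Fin d, ((2:ℝ) ^ m - 1) := by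
        rw [Finset.prod_const]; simp
  _ = ∏ ℓ, (u ℓ - 1) * x ℓ * r ℓ := Finset.prod_congr rfl fun ℓ _ => key ℓ
  _ = (∏ ℓ, (u ℓ - 1)) * (∏ ℓ, x ℓ) * (∏ ℓ, r ℓ) := by
        rw [← Finset.prod_mul_distrib, ← Finset.prod_mul_distrib]
  _ ≤ (∏ ℓ, (u ℓ - 1)) * (2 ^ m) * 8 := by
        have hprodu1 : (0:ℝ) ≤ ∏ ℓ, (u ℓ - 1) :=
          Finset.prod_nonneg fun ℓ _ => by linarith [h2 ℓ]
        have hxp : (0:ℝ) ≤ ∏ ℓ, x ℓ := Finset.prod_nonneg fun ℓ _ => by linarith [hx1 ℓ]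
        have hrp : (0:ℝ) ≤ ∏ ℓ, r ℓ := Finset.prod_nonneg fun ℓ _ => by
          have : (1:ℝ) ≤ r ℓ := by
            rw [hr]; dsimp only
            have : (0:ℝ) ≤ (2 ^ m - u ℓ) / (2 ^ m * (u ℓ - 1)) :=
              div_nonneg (by linarith [hub ℓ]) (by nlinarith [h2 ℓ])
            linarith
          linarith
        have h1 : (∏ ℓ, (u ℓ - 1)) * (∏ ℓ, x ℓ) ≤ (∏ ℓ, (u ℓ - 1)) * 2 ^ m :=
          mul_le_mul_of_nonneg_left hxprod hprodu1
        calc (∏ ℓ, (u ℓ - 1)) * (∏ ℓ, x ℓ) * (∏ ℓ, r ℓ)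
            ≤ (∏ ℓ, (u ℓ - 1)) * (∏ ℓ, x ℓ) * 8 := by
              apply mul_le_mul_of_nonneg_left hrprod (by positivity)
        _ ≤ (∏ ℓ, (u ℓ - 1)) * (2 ^ m) * 8 := by nlinarith
  _ = 8 * 2 ^ m * ∏ ℓ, (u ℓ - 1) := by ring

def typ1 (m a b : ℕ) : Prop := 2 ^ m ≤ b - a + 4 ∧ b - a + 2 ≠ 2 ^ m

def typ2 (m a b : ℕ) : Prop := b - a + 4 < 2 ^ m

def S1 (m : ℕ) {d : ℕ} (c : (Fin d → ℕ) × (Fin d → ℕ)) : Finset (Fin d) :=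
  univ.filter fun ℓ => typ1 m (c.1 ℓ) (c.2 ℓ)

def S2 (m : ℕ) {d : ℕ} (c : (Fin d → ℕ) × (Fin d → ℕ)) : Finset (Fin d) :=
  univ.filter fun ℓ => typ2 m (c.1 ℓ) (c.2 ℓ)

lemma mem_Afin_ranges {m d : ℕ} {c : (Fin d → ℕ) × (Fin d → ℕ)} (hc : c ∈ Afin m d) (ℓ : Fin d) :
    1 ≤ c.1 ℓ ∧ c.1 ℓ ≤ c.2 ℓ ∧ c.2 ℓ ≤ 2 ^ m - 1 := by
  simp only [Afin, Finset.mem_filter, Finset.mem_product, Fintype.mem_piFinset] at hc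
  have h1 := hc.1.1 ℓ; have h2 := hc.1.2 ℓ
  simp only [Jgrid, Finset.mem_Icc] at h1 h2
  exact ⟨h1.1, hc.2.1 ℓ, h2.2⟩

-- helper : exp j ≤ (M/v)^M
lemma exp_le_div_pow (M j : ℕ) (v : ℝ) (h2 : 2 ≤ v) (hvM : v ≤ (M:ℝ) - j) :
    Real.exp j ≤ ((M:ℝ) / v) ^ M := by
  have hMj : (0:ℝ) < (M:ℝ) - j := by linarith
  have hM : (0:ℝ) < M := by
    have : (0:ℝ) ≤ j := Nat.cast_nonneg j
    linarith
  have hMne : M ≠ 0 := by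
    intro h; rw [h] at hM; simp at hM
  have step : Real.exp ((j:ℝ) / M) ≤ (M:ℝ) / ((M:ℝ) - j) := by
    have h2' : ((M:ℝ) - j)/M ≤ Real.exp (-((j:ℝ)/M)) := by
      have h1 := Real.add_one_le_exp (-((j:ℝ)/M))
      have he : ((M:ℝ) - j)/M = -((j:ℝ)/M) + 1 := by field_simp; ring
      linarith
    have hmul : Real.exp ((j:ℝ)/M) * (((M:ℝ) - j)/M) ≤ 1 := by
      calc Real.exp ((j:ℝ)/M) * (((M:ℝ) - j)/M)
          ≤ Real.exp ((j:ℝ)/M) * Real.exp (-((j:ℝ)/M)) :=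
            mul_le_mul_of_nonneg_left h2' (Real.exp_pos _).le
      _ = 1 := by rw [← Real.exp_add]; simp
    rw [le_div_iff₀ hMj]
    have key : Real.exp ((j:ℝ)/M) * (((M:ℝ) - j)/M) * M = Real.exp ((j:ℝ)/M) * ((M:ℝ) - j) := by
      field_simp
    nlinarith [mul_le_mul_of_nonneg_right hmul hM.le]
  calc Real.exp (j:ℝ) = Real.exp ((j:ℝ)/M) ^ M := by
        rw [← Real.exp_nat_mul]
        congr 1; field_simp
  _ ≤ ((M:ℝ) / ((M:ℝ) - j)) ^ M := by
      apply pow_le_pow_left₀ (Real.exp_pos _).le step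
  _ ≤ ((M:ℝ) / v) ^ M := by
      apply pow_le_pow_left₀ (by positivity)
      apply div_le_div_of_nonneg_left hM.le (by linarith) hvM

lemma budget {m d : ℕ} (hm : 1 ≤ m) (hd : 1 ≤ d) {c : (Fin d → ℕ) × (Fin d → ℕ)}
    (hc : c ∈ Afin m d) : (S1 m c).card + 2 * (S2 m c).card ≤ m * 2 ^ m := by
  have h2m : 2 ≤ 2 ^ m := by
    calc 2 = 2^1 := rfl
    _ ≤ 2 ^ m := Nat.pow_le_pow_right (by norm_num) hm
  set u : Fin d → ℝ := fun ℓ => ((c.2 ℓ - c.1 ℓ : ℕ) : ℝ) + 2 with hu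
  have hu2 : ∀ ℓ, 2 ≤ u ℓ := fun ℓ => by
    have : (0:ℝ) ≤ ((c.2 ℓ - c.1 ℓ : ℕ) : ℝ) := Nat.cast_nonneg _
    rw [hu]; dsimp only; linarith
  have hupos : ∀ ℓ, 0 < u ℓ := fun ℓ => lt_of_lt_of_le two_pos (hu2 ℓ)
  have hub : ∀ ℓ, u ℓ ≤ 2 ^ m := by
    intro ℓ
    obtain ⟨ha, hab, hb⟩ := mem_Afin_ranges hc ℓ
    rw [hu]; dsimp only
    have : (c.2 ℓ - c.1 ℓ : ℕ) + 2 ≤ 2 ^ m := by omega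
    calc ((c.2 ℓ - c.1 ℓ : ℕ) : ℝ) + 2 = (((c.2 ℓ - c.1 ℓ) + 2 : ℕ) : ℝ) := by push_cast; ring
    _ ≤ ((2^m : ℕ) : ℝ) := by exact_mod_cast this
    _ = (2:ℝ)^m := by push_cast; ring
  have hprod : (2:ℝ) ^ (m * (d-1)) ≤ ∏ ℓ, u ℓ := by
    have hn : 2 ^ (m * (d - 1)) ≤ ∏ ℓ, (c.2 ℓ - c.1 ℓ + 2) := by
      simp only [Afin, Finset.mem_filter] at hc
      exact le_of_lt hc.2.2
    calc (2:ℝ) ^ (m * (d-1)) = ((2 ^ (m * (d-1)) : ℕ) : ℝ) := by push_cast; ring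
    _ ≤ ((∏ ℓ, (c.2 ℓ - c.1 ℓ + 2) : ℕ) : ℝ) := by exact_mod_cast hn
    _ = ∏ ℓ, u ℓ := by
        rw [Nat.cast_prod]
        refine Finset.prod_congr rfl fun ℓ _ => ?_
        simp only [hu]; push_cast; ring
  set x : Fin d → ℝ := fun ℓ => 2 ^ m / u ℓ with hx
  have hx1 : ∀ ℓ, 1 ≤ x ℓ := fun ℓ => (one_le_div (hupos ℓ)).2 (hub ℓ)
  have hMpos : (0:ℝ) < 2 ^ m := by positivity
  have hprodpos : (0:ℝ) < ∏ ℓ, u ℓ := Finset.prod_pos fun ℓ _ => hupos ℓ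
  have hxprod : ∏ ℓ, x ℓ ≤ 2 ^ m := by
    rw [hx]
    rw [Finset.prod_div_distrib, Finset.prod_const, Finset.card_univ, Fintype.card_fin]
    rw [div_le_iff₀ hprodpos]
    have hmd : m * d = m + m * (d - 1) := by
      conv_lhs => rw [show d = (d - 1) + 1 by omega]
      rw [Nat.mul_add]; ring
    calc ((2:ℝ) ^ m) ^ d = 2 ^ (m * d) := by rw [← pow_mul]
    _ = 2 ^ m * 2 ^ (m * (d-1)) := by rw [hmd, pow_add]
    _ ≤ 2 ^ m * ∏ ℓ, u ℓ := mul_le_mul_of_nonneg_left hprod hMpos.le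
  -- per coordinate bounds
  have hS1 : ∀ ℓ ∈ S1 m c, (2:ℝ) ≤ x ℓ ^ (2^m) := by
    intro ℓ hℓ
    simp only [S1, Finset.mem_filter] at hℓ
    simp only [typ1] at hℓ
    obtain ⟨ha, hab, hb⟩ := mem_Afin_ranges hc ℓ
    have hun : (c.2 ℓ - c.1 ℓ : ℕ) + 2 ≤ 2^m - 1 := by omega
    have huv : u ℓ ≤ ((2^m : ℕ) : ℝ) - 1 := by
      rw [hu]; dsimp only
      calc ((c.2 ℓ - c.1 ℓ : ℕ) : ℝ) + 2 = (((c.2 ℓ - c.1 ℓ) + 2 : ℕ) : ℝ) := by push_cast; ring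
      _ ≤ ((2^m - 1 : ℕ) : ℝ) := by exact_mod_cast hun
      _ ≤ ((2^m : ℕ) : ℝ) - 1 := by
          have : ((2^m - 1 : ℕ) : ℝ) = ((2^m : ℕ) : ℝ) - 1 := by
            have : (1:ℕ) ≤ 2^m := by omega
            push_cast [this]; ring
          linarith [le_of_eq this]
    have := exp_le_div_pow (2^m) 1 (u ℓ) (hu2 ℓ) (by push_cast at huv ⊢; linarith)
    calc (2:ℝ) ≤ Real.exp 1 := by
          have := Real.exp_one_gt_d9; norm_num at this ⊢; linarith
    _ ≤ (((2^m : ℕ):ℝ) / u ℓ) ^ (2^m) := by exact_mod_cast this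
    _ = x ℓ ^ (2^m) := by rw [hx]; dsimp only; norm_num
  have hS2 : ∀ ℓ ∈ S2 m c, (4:ℝ) ≤ x ℓ ^ (2^m) := by
    intro ℓ hℓ
    simp only [S2, Finset.mem_filter] at hℓ
    simp only [typ2] at hℓ
    obtain ⟨ha, hab, hb⟩ := mem_Afin_ranges hc ℓ
    have hun : (c.2 ℓ - c.1 ℓ : ℕ) + 2 ≤ 2^m - 3 := by omega
    have huv : u ℓ ≤ ((2^m : ℕ) : ℝ) - 3 := by
      rw [hu]; dsimp only
      have h3 : (3:ℕ) ≤ 2^m := by omega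
      calc ((c.2 ℓ - c.1 ℓ : ℕ) : ℝ) + 2 = (((c.2 ℓ - c.1 ℓ) + 2 : ℕ) : ℝ) := by push_cast; ring
      _ ≤ ((2^m - 3 : ℕ) : ℝ) := by exact_mod_cast hun
      _ = ((2^m : ℕ) : ℝ) - 3 := by push_cast [h3]; ring
    have := exp_le_div_pow (2^m) 3 (u ℓ) (hu2 ℓ) (by push_cast at huv ⊢; linarith)
    calc (4:ℝ) ≤ Real.exp 3 := by
          have h1 := Real.exp_one_gt_d9
          have : Real.exp 3 = Real.exp 1 * Real.exp 1 * Real.exp 1 := by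
            rw [← Real.exp_add, ← Real.exp_add]; norm_num
          nlinarith [Real.exp_pos 1]
    _ ≤ (((2^m : ℕ):ℝ) / u ℓ) ^ (2^m) := by exact_mod_cast this
    _ = x ℓ ^ (2^m) := by rw [hx]; dsimp only; norm_num
  -- combine
  have hdisj : Disjoint (S1 m c) (S2 m c) := by
    rw [Finset.disjoint_left]
    intro ℓ h1 h2
    simp only [S1, S2, Finset.mem_filter] at h1 h2
    simp only [typ1, typ2] at h1 h2
    omega
  have hchain : (2:ℝ) ^ ((S1 m c).card + 2 * (S2 m c).card) ≤ 2 ^ (m * 2^m) := by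
    have e1 : (2:ℝ) ^ ((S1 m c).card + 2 * (S2 m c).card)
        = (∏ ℓ ∈ S1 m c, (2:ℝ)) * ∏ ℓ ∈ S2 m c, (4:ℝ) := by
      rw [Finset.prod_const, Finset.prod_const, pow_add, pow_mul]
      norm_num
    have e2 : (∏ ℓ ∈ S1 m c, (2:ℝ)) * ∏ ℓ ∈ S2 m c, (4:ℝ)
        ≤ ∏ ℓ ∈ S1 m c ∪ S2 m c, x ℓ ^ (2^m) := by
      rw [Finset.prod_union hdisj]
      apply mul_le_mul
      · exact Finset.prod_le_prod (fun _ _ => by norm_num) hS1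
      · exact Finset.prod_le_prod (fun _ _ => by norm_num) hS2
      · exact Finset.prod_nonneg (fun _ _ => by norm_num)
      · exact Finset.prod_nonneg (fun ℓ _ => by positivity)
    have e3 : ∏ ℓ ∈ S1 m c ∪ S2 m c, x ℓ ^ (2^m) ≤ ∏ ℓ, x ℓ ^ (2^m) := by
      rw [← Finset.prod_sdiff (Finset.subset_univ (S1 m c ∪ S2 m c))]
      have hone : (1:ℝ) ≤ ∏ ℓ ∈ univ \ (S1 m c ∪ S2 m c), x ℓ ^ (2^m) := by
        calc (1:ℝ) = ∏ ℓ ∈ univ \ (S1 m c ∪ S2 m c), 1 := by simp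
        _ ≤ ∏ ℓ ∈ univ \ (S1 m c ∪ S2 m c), x ℓ ^ (2^m) :=
            Finset.prod_le_prod (by simp) (fun ℓ _ => one_le_pow₀ (hx1 ℓ))
      have hpos : (0:ℝ) ≤ ∏ ℓ ∈ S1 m c ∪ S2 m c, x ℓ ^ (2^m) :=
        Finset.prod_nonneg (fun ℓ _ => by positivity)
      nlinarith
    have e4 : ∏ ℓ, x ℓ ^ (2^m) ≤ (2:ℝ) ^ (m * 2^m) := by
      rw [Finset.prod_pow]
      calc (∏ ℓ, x ℓ) ^ 2 ^ m ≤ ((2:ℝ) ^ m) ^ 2 ^ m := by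
            apply pow_le_pow_left₀ (Finset.prod_nonneg fun ℓ _ => by positivity) hxprod
      _ = (2:ℝ) ^ (m * 2 ^ m) := by rw [← pow_mul]
    calc (2:ℝ) ^ ((S1 m c).card + 2 * (S2 m c).card) = _ := e1
    _ ≤ _ := e2
    _ ≤ _ := e3
    _ ≤ _ := e4
  exact (pow_le_pow_iff_right₀ (by norm_num : (1:ℝ) < 2)).1 hchain

def D1 (m : ℕ) : Finset (ℕ × ℕ) := (Finset.Icc 1 3) ×ˢ (Finset.Icc (2^m - 3) (2^m - 1))

def D2 (m : ℕ) : Finset (ℕ × ℕ) := Jgrid m ×ˢ Jgrid m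

lemma card_D1 (m : ℕ) : (D1 m).card ≤ 9 := by
  rw [D1, Finset.card_product, Nat.card_Icc, Nat.card_Icc]
  have : 2^m - 1 + 1 - (2^m - 3) ≤ 3 := by
    have : 1 ≤ 2^m := Nat.one_le_two_pow
    omega
  calc (3 + 1 - 1) * (2^m - 1 + 1 - (2^m - 3)) = 3 * (2^m - 1 + 1 - (2^m - 3)) := rfl
  _ ≤ 3 * 3 := Nat.mul_le_mul_left 3 this
  _ = 9 := rfl

lemma card_D2 (m : ℕ) : (D2 m).card ≤ 2^m * 2^m := by
  rw [D2, Finset.card_product, Jgrid, Nat.card_Icc]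
  have h0 : 1 ≤ 2^m := Nat.one_le_two_pow
  have h1 : 2^m - 1 + 1 - 1 ≤ 2^m := by omega
  exact Nat.mul_le_mul h1 h1

def Pfin (m d : ℕ) : Finset (Finset (Fin d) × Finset (Fin d)) :=
  ((univ : Finset (Fin d)).powerset ×ˢ (univ : Finset (Fin d)).powerset).filter
    (fun p => Disjoint p.1 p.2 ∧ p.1.card + 2 * p.2.card ≤ m * 2 ^ m)

lemma cls_mem_Pfin {m d : ℕ} (hm : 1 ≤ m) (hd : 1 ≤ d) {c : (Fin d → ℕ) × (Fin d → ℕ)}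
    (hc : c ∈ Afin m d) : (S1 m c, S2 m c) ∈ Pfin m d := by
  simp only [Pfin, Finset.mem_filter, Finset.mem_product, Finset.mem_powerset]
  refine ⟨⟨Finset.filter_subset _ _, Finset.filter_subset _ _⟩, ?_, budget hm hd hc⟩
  rw [Finset.disjoint_left]
  intro ℓ h1 h2
  simp only [S1, S2, Finset.mem_filter] at h1 h2
  simp only [typ1, typ2] at h1 h2
  omega

lemma fiber_card {m d : ℕ} (p : Finset (Fin d) × Finset (Fin d)) (hdisj : Disjoint p.1 p.2) :
    ((Afin m d).filter (fun c => (S1 m c, S2 m c) = p)).card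
      ≤ 9 ^ p.1.card * (2^m * 2^m) ^ p.2.card := by
  set tgt : Finset (Fin d → ℕ × ℕ) := Fintype.piFinset
    (fun ℓ => if ℓ ∈ p.1 then D1 m else if ℓ ∈ p.2 then D2 m else {(1, 2^m - 1)}) with htgt
  have hinj : ∀ c ∈ (Afin m d).filter (fun c => (S1 m c, S2 m c) = p),
      (fun ℓ => (c.1 ℓ, c.2 ℓ)) ∈ tgt := by
    intro c hc
    simp only [Finset.mem_filter] at hc
    obtain ⟨hcA, hcp⟩ := hc
    have hp1 : p.1 = S1 m c := by rw [← hcp]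
    have hp2 : p.2 = S2 m c := by rw [← hcp]
    rw [htgt, Fintype.mem_piFinset]
    intro ℓ
    obtain ⟨ha, hab, hb⟩ := mem_Afin_ranges hcA ℓ
    have h1 : 1 ≤ 2^m := Nat.one_le_two_pow
    by_cases h1m : ℓ ∈ p.1
    · rw [if_pos h1m]
      have : ℓ ∈ S1 m c := by rw [← hp1]; exact h1m
      simp only [S1, Finset.mem_filter] at this
      simp only [typ1] at this
      simp only [D1, Finset.mem_product, Finset.mem_Icc]
      omega
    · rw [if_neg h1m]
      by_cases h2m : ℓ ∈ p.2
      · rw [if_pos h2m]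
        simp only [D2, Finset.mem_product, Jgrid, Finset.mem_Icc]
        omega
      · rw [if_neg h2m]
        have hn1 : ℓ ∉ S1 m c := by rw [← hp1]; exact h1m
        have hn2 : ℓ ∉ S2 m c := by rw [← hp2]; exact h2m
        simp only [S1, S2, Finset.mem_filter, Finset.mem_univ, true_and] at hn1 hn2
        simp only [typ1, typ2,
          not_and, not_lt, Decidable.not_not] at hn1 hn2
        simp only [Finset.mem_singleton, Prod.mk.injEq]
        constructor <;> omega
  calc ((Afin m d).filter (fun c => (S1 m c, S2 m c) = p)).card ≤ tgt.card := by
        apply Finset.card_le_card_of_injOn _ hinj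
        intro c _ c' _ h
        have h1 : c.1 = c'.1 := funext fun ℓ => congrArg Prod.fst (congrFun h ℓ)
        have h2 : c.2 = c'.2 := funext fun ℓ => congrArg Prod.snd (congrFun h ℓ)
        exact Prod.ext h1 h2
  _ ≤ 9 ^ p.1.card * (2^m * 2^m) ^ p.2.card := by
      rw [htgt, Fintype.card_piFinset]
      have hsplit : ∀ ℓ : Fin d,
          (if ℓ ∈ p.1 then D1 m else if ℓ ∈ p.2 then D2 m else {(1, 2^m - 1)}).card
          ≤ (if ℓ ∈ p.1 then 9 else if ℓ ∈ p.2 then 2^m * 2^m else 1) := by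
        intro ℓ
        by_cases h1m : ℓ ∈ p.1
        · simpa [h1m] using card_D1 m
        · by_cases h2m : ℓ ∈ p.2
          · simpa [h1m, h2m] using card_D2 m
          · simp [h1m, h2m]
      calc ∏ ℓ, (if ℓ ∈ p.1 then D1 m else if ℓ ∈ p.2 then D2 m else {(1, 2^m - 1)}).card
          ≤ ∏ ℓ, (if ℓ ∈ p.1 then 9 else if ℓ ∈ p.2 then 2^m * 2^m else 1) :=
            Finset.prod_le_prod' (fun ℓ _ => hsplit ℓ)
      _ = 9 ^ p.1.card * (2^m * 2^m) ^ p.2.card := by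
          rw [← Finset.prod_sdiff (Finset.subset_univ (p.1 ∪ p.2)), Finset.prod_union hdisj]
          have e0 : ∏ ℓ ∈ univ \ (p.1 ∪ p.2), (if ℓ ∈ p.1 then 9 else if ℓ ∈ p.2 then 2^m * 2^m else 1) = 1 := by
            apply Finset.prod_eq_one
            intro ℓ hℓ
            simp only [Finset.mem_sdiff, Finset.mem_union, not_or] at hℓ
            rw [if_neg hℓ.2.1, if_neg hℓ.2.2]
          have e1 : ∏ ℓ ∈ p.1, (if ℓ ∈ p.1 then 9 else if ℓ ∈ p.2 then 2^m * 2^m else 1) = 9 ^ p.1.card := by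
            rw [Finset.prod_congr rfl (fun ℓ hℓ => by rw [if_pos hℓ]), Finset.prod_const]
          have e2 : ∏ ℓ ∈ p.2, (if ℓ ∈ p.1 then 9 else if ℓ ∈ p.2 then 2^m * 2^m else 1) = (2^m * 2^m) ^ p.2.card := by
            refine Eq.trans (Finset.prod_congr rfl (fun ℓ hℓ => ?_)) (Finset.prod_const _)
            rw [if_neg (Finset.disjoint_right.1 hdisj hℓ), if_pos hℓ]
          rw [e0, e1, e2, one_mul]

lemma sum_prod_mul {α β : Type*} (s : Finset α) (t : Finset β) (f : α → ℝ) (g : β → ℝ) :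
    ∑ p ∈ s ×ˢ t, f p.1 * g p.2 = (∑ a ∈ s, f a) * ∑ b ∈ t, g b := by
  rw [Finset.sum_mul_sum, Finset.sum_product]

lemma sum_powerset_pow {d : ℕ} (x : ℝ) :
    ∑ s ∈ (univ : Finset (Fin d)).powerset, x ^ s.card = (x + 1) ^ d := by
  have := Finset.prod_add (fun _ : Fin d => x) (fun _ => (1:ℝ)) univ
  simp only [Finset.prod_const, Finset.card_univ, Fintype.card_fin, one_pow, mul_one] at this
  rw [this]

lemma card_Afin_le {m d : ℕ} (hm : 1 ≤ m) (hd : 1 ≤ d) :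
    ((Afin m d).card : ℝ) ≤ 2 * ((2:ℝ)^(m+3) * d) ^ (m * 2^m) := by
  set K : ℝ := (2:ℝ)^(m+3) * d with hK
  have hdpos : (0:ℝ) < d := by exact_mod_cast hd
  have hK1 : (1:ℝ) ≤ K := by
    rw [hK]
    have h1 : (1:ℝ) ≤ (2:ℝ)^(m+3) := one_le_pow₀ one_le_two
    have h2 : (1:ℝ) ≤ (d:ℝ) := by exact_mod_cast hd
    nlinarith
  have hKpos : (0:ℝ) < K := lt_of_lt_of_le one_pos hK1
  -- fiberwise
  have hfib : (Afin m d).card = ∑ p ∈ Pfin m d, ((Afin m d).filter (fun c => (S1 m c, S2 m c) = p)).card := by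
    apply Finset.card_eq_sum_card_fiberwise
    intro c hc
    exact cls_mem_Pfin hm hd hc
  have hcast : ((Afin m d).card : ℝ) ≤ ∑ p ∈ Pfin m d, ((9:ℝ) ^ p.1.card * ((2:ℝ)^m * 2^m) ^ p.2.card) := by
    rw [hfib]
    push_cast
    apply Finset.sum_le_sum
    intro p hp
    simp only [Pfin, Finset.mem_filter] at hp
    have := fiber_card (m := m) p hp.2.1
    calc (((Afin m d).filter (fun c => (S1 m c, S2 m c) = p)).card : ℝ)
        ≤ ((9 ^ p.1.card * (2^m * 2^m) ^ p.2.card : ℕ) : ℝ) := by exact_mod_cast this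
    _ = (9:ℝ) ^ p.1.card * ((2:ℝ)^m * 2^m) ^ p.2.card := by push_cast; ring
  have hterm : ∀ p ∈ Pfin m d, (9:ℝ) ^ p.1.card * ((2:ℝ)^m * 2^m) ^ p.2.card
      ≤ K ^ (m * 2^m) * ((9/K) ^ p.1.card * (((2:ℝ)^m * 2^m)/K^2) ^ p.2.card) := by
    intro p hp
    simp only [Pfin, Finset.mem_filter] at hp
    have hbud := hp.2.2
    have e : (9:ℝ) ^ p.1.card * ((2:ℝ)^m * 2^m) ^ p.2.card
        = K ^ (p.1.card + 2 * p.2.card) * ((9/K) ^ p.1.card * (((2:ℝ)^m * 2^m)/K^2) ^ p.2.card) := by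
      rw [pow_add, pow_mul, div_pow, div_pow, ← pow_mul]
      field_simp
      try ring
    rw [e]
    apply mul_le_mul_of_nonneg_right _ (by positivity)
    exact pow_le_pow_right₀ hK1 hbud
  have hsum2 : ∑ p ∈ Pfin m d, ((9:ℝ) ^ p.1.card * ((2:ℝ)^m * 2^m) ^ p.2.card)
      ≤ K ^ (m * 2^m) * ((9/K + 1) ^ d * (((2:ℝ)^m * 2^m)/K^2 + 1) ^ d) := by
    calc ∑ p ∈ Pfin m d, ((9:ℝ) ^ p.1.card * ((2:ℝ)^m * 2^m) ^ p.2.card)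
        ≤ ∑ p ∈ Pfin m d, K ^ (m * 2^m) * ((9/K) ^ p.1.card * (((2:ℝ)^m * 2^m)/K^2) ^ p.2.card) :=
          Finset.sum_le_sum hterm
    _ ≤ ∑ p ∈ (univ : Finset (Fin d)).powerset ×ˢ (univ : Finset (Fin d)).powerset,
          K ^ (m * 2^m) * ((9/K) ^ p.1.card * (((2:ℝ)^m * 2^m)/K^2) ^ p.2.card) := by
        apply Finset.sum_le_sum_of_subset_of_nonneg (Finset.filter_subset _ _)
        intro p _ _
        positivity
    _ = K ^ (m * 2^m) * ((∑ s ∈ (univ : Finset (Fin d)).powerset, (9/K) ^ s.card)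
          * ∑ s ∈ (univ : Finset (Fin d)).powerset, (((2:ℝ)^m * 2^m)/K^2) ^ s.card) := by
        rw [← Finset.mul_sum]
        congr 1
        exact sum_prod_mul ((univ : Finset (Fin d)).powerset) ((univ : Finset (Fin d)).powerset)
          (fun s => ((9:ℝ)/K) ^ s.card) (fun s => (((2:ℝ)^m * 2^m)/K^2) ^ s.card)
    _ = K ^ (m * 2^m) * ((9/K + 1) ^ d * (((2:ℝ)^m * 2^m)/K^2 + 1) ^ d) := by
        rw [sum_powerset_pow, sum_powerset_pow]
  have hexpbound : ∀ (x c : ℝ), 0 ≤ x → (d:ℝ) * x ≤ c → (x + 1) ^ d ≤ Real.exp c := by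
    intro x c hx hdc
    calc (x + 1) ^ d ≤ Real.exp x ^ d := by
          apply pow_le_pow_left₀ (by linarith)
          have := Real.add_one_le_exp x; linarith
    _ = Real.exp (d * x) := by rw [← Real.exp_nat_mul]
    _ ≤ Real.exp c := Real.exp_le_exp.2 hdc
  have hb1 : ((9:ℝ)/K + 1) ^ d ≤ Real.exp (9/16) := by
    apply hexpbound _ _ (by positivity)
    rw [hK]
    have h16 : (16:ℝ) ≤ 2^(m+3) := by
      calc (16:ℝ) = 2^4 := by norm_num
      _ ≤ 2^(m+3) := pow_le_pow_right₀ one_le_two (by omega)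
    have e : (d:ℝ) * (9 / (2^(m+3) * d)) = 9 / 2^(m+3) := by
      field_simp
      try ring
    rw [e]
    exact div_le_div_of_nonneg_left (by norm_num) (by norm_num) h16
  have hb2 : (((2:ℝ)^m * 2^m)/K^2 + 1) ^ d ≤ Real.exp (1/64) := by
    apply hexpbound _ _ (by positivity)
    rw [hK]
    have e : (d:ℝ) * (((2:ℝ)^m * 2^m) / (2^(m+3) * d)^2) = ((2:ℝ)^m * 2^m) / (2^(m+3))^2 / d := by
      field_simp
      try ring
    rw [e]
    have epow : ((2:ℝ)^(m+3))^2 = ((2:ℝ)^m * 2^m) * 64 := by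
      rw [← pow_mul, ← pow_add]
      have h2 : (m+3)*2 = (m+m)+6 := by ring
      rw [h2, pow_add]
      norm_num
    have e2 : ((2:ℝ)^m * 2^m) / ((2:ℝ)^(m+3))^2 = 1/64 := by
      rw [epow, div_mul_eq_div_div, div_self (by positivity : ((2:ℝ)^m * 2^m) ≠ 0)]
    rw [e2]
    apply div_le_self (by norm_num)
    exact_mod_cast hd
  have hexp2 : Real.exp (9/16) * Real.exp (1/64) ≤ 2 := by
    rw [← Real.exp_add]
    have he : (9:ℝ)/16 + 1/64 = 37/64 := by norm_num
    rw [he]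
    have hlog := Real.log_two_gt_d9
    have hlt : Real.exp (37/64) < Real.exp (Real.log 2) := by
      apply Real.exp_lt_exp.2
      linarith
    rw [Real.exp_log (by norm_num : (0:ℝ) < 2)] at hlt
    linarith
  calc ((Afin m d).card : ℝ)
      ≤ K ^ (m*2^m) * (((9:ℝ)/K + 1)^d * (((2:ℝ)^m * 2^m)/K^2 + 1)^d) := le_trans hcast hsum2
  _ ≤ K ^ (m*2^m) * (Real.exp (9/16) * Real.exp (1/64)) := by
      apply mul_le_mul_of_nonneg_left _ (by positivity)
      apply mul_le_mul hb1 hb2 (by positivity) (Real.exp_pos _).le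
  _ ≤ K ^ (m*2^m) * 2 := mul_le_mul_of_nonneg_left hexp2 (by positivity)
  _ = 2 * K ^ (m*2^m) := by ring

def Sgrid (m : ℕ) (J : Set ℝ) : Finset ℕ := (Jgrid m).filter (fun j => θ m j ∈ J)

lemma Sgrid_consec {m : ℕ} {J : Set ℝ} (hJ : IsIntervalIn01 J) {j1 j2 j : ℕ}
    (h1 : j1 ∈ Sgrid m J) (h2 : j2 ∈ Sgrid m J) (hle1 : j1 ≤ j) (hle2 : j ≤ j2) :
    j ∈ Sgrid m J := by
  simp only [Sgrid, Finset.mem_filter, Jgrid, Finset.mem_Icc] at h1 h2 ⊢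
  refine ⟨⟨by omega, by omega⟩, ?_⟩
  have hmono : ∀ i i' : ℕ, i ≤ i' → θ m i ≤ θ m i' := by
    intro i i' h
    simp only [θ]
    gcongr
  exact hJ.2.out h1.2 h2.2 ⟨hmono _ _ hle1, hmono _ _ hle2⟩

lemma Sgrid_count {m : ℕ} {J : Set ℝ} (hJ : IsIntervalIn01 J) :
    2 ^ m * (volume J).toReal ≤ (Sgrid m J).card + 1 := by
  by_cases hne : J = ∅
  · subst hne
    have h0 : (volume (∅:Set ℝ)).toReal = 0 := by simp
    rw [h0, mul_zero]
    positivity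
  have hJne : J.Nonempty := Set.nonempty_iff_ne_empty.2 hne
  have hbdd_below : BddBelow J := ⟨0, fun x hx => (hJ.1 hx).1⟩
  have hbdd_above : BddAbove J := ⟨1, fun x hx => (hJ.1 hx).2⟩
  set α := sInf J with hα
  set β := sSup J with hβ
  have hα0 : 0 ≤ α := le_csInf hJne (fun x hx => (hJ.1 hx).1)
  have hβ1 : β ≤ 1 := csSup_le hJne (fun x hx => (hJ.1 hx).2)
  have hαβ : α ≤ β := csInf_le_csSup hJne hbdd_below hbdd_above
  have hvol : (volume J).toReal ≤ β - α := by
    have h1 : volume J ≤ volume (Set.Icc α β) :=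
      measure_mono (subset_Icc_csInf_csSup hbdd_below hbdd_above)
    rw [Real.volume_Icc] at h1
    exact ENNReal.toReal_le_of_le_ofReal (by linarith) h1
  have hIoo : Set.Ioo α β ⊆ J := by
    intro x hx
    obtain ⟨p, hp, hpx⟩ := (csInf_lt_iff hbdd_below hJne).1 hx.1
    obtain ⟨q, hq, hxq⟩ := (lt_csSup_iff hbdd_above hJne).1 hx.2
    exact hJ.2.out hp hq ⟨hpx.le, hxq.le⟩
  set T : Finset ℤ := Finset.Ioo ⌊(2:ℝ)^m * α⌋ ⌈(2:ℝ)^m * β⌉ with hT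
  have h2m : (0:ℝ) < 2^m := by positivity
  have hmaps : ∀ z ∈ T, z.toNat ∈ Sgrid m J := by
    intro z hz
    rw [hT, Finset.mem_Ioo] at hz
    have hfl : (0:ℤ) ≤ ⌊(2:ℝ)^m * α⌋ := by
      apply Int.floor_nonneg.2; positivity
    have hz1 : 1 ≤ z := by omega
    have hzr1 : (2:ℝ)^m * α < z := by
      calc (2:ℝ)^m * α < ⌊(2:ℝ)^m * α⌋ + 1 := Int.lt_floor_add_one _
      _ ≤ z := by exact_mod_cast hz.1
    have hzr2 : (z:ℝ) < (2:ℝ)^m * β := by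
      calc (z:ℝ) ≤ ⌈(2:ℝ)^m * β⌉ - 1 := by
            have : z ≤ ⌈(2:ℝ)^m * β⌉ - 1 := by omega
            exact_mod_cast this
      _ < (2:ℝ)^m * β := by
          have := Int.ceil_lt_add_one ((2:ℝ)^m * β)
          linarith
    have hzlt : (z:ℝ) < 2^m := by
      calc (z:ℝ) < (2:ℝ)^m * β := hzr2
      _ ≤ 2^m := by nlinarith
    have hzMn : z < ((2^m : ℕ) : ℤ) := by
      have h' : (z:ℝ) < (((2^m : ℕ)):ℝ) := by push_cast; linarith [hzlt]
      exact_mod_cast h'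
    have hθ : θ m z.toNat ∈ Set.Ioo α β := by
      have hc : ((z.toNat : ℕ) : ℝ) = (z:ℝ) := by
        have h' : (z.toNat : ℤ) = z := Int.toNat_of_nonneg (by omega)
        exact_mod_cast h'
      constructor
      · rw [θ, hc, lt_div_iff₀ h2m]; linarith
      · rw [θ, hc, div_lt_iff₀ h2m]; linarith
    simp only [Sgrid, Finset.mem_filter, Jgrid, Finset.mem_Icc]
    have h1 : (1:ℕ) ≤ 2^m := Nat.one_le_two_pow
    refine ⟨⟨by omega, by omega⟩, hIoo hθ⟩
  have hinj : Set.InjOn Int.toNat T := by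
    intro z1 h1 z2 h2 h
    simp only [hT, Finset.coe_Ioo, Set.mem_Ioo] at h1 h2
    have hfl : (0:ℤ) ≤ ⌊(2:ℝ)^m * α⌋ := Int.floor_nonneg.2 (by positivity)
    omega
  have hcard : T.card ≤ (Sgrid m J).card := Finset.card_le_card_of_injOn _ hmaps hinj
  have hTcard : (⌈(2:ℝ)^m * β⌉ - ⌊(2:ℝ)^m * α⌋ - 1 : ℝ) ≤ (T.card : ℝ) := by
    rw [hT, Int.card_Ioo]
    have := Int.self_le_toNat (⌈(2:ℝ)^m * β⌉ - ⌊(2:ℝ)^m * α⌋ - 1)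
    have hcast : ((⌈(2:ℝ)^m * β⌉ - ⌊(2:ℝ)^m * α⌋ - 1 : ℤ) : ℝ)
        ≤ (((⌈(2:ℝ)^m * β⌉ - ⌊(2:ℝ)^m * α⌋ - 1).toNat : ℕ) : ℝ) := by
      exact_mod_cast this
    push_cast at hcast ⊢
    linarith
  have hceil := Int.le_ceil ((2:ℝ)^m * β)
  have hfloor := Int.floor_le ((2:ℝ)^m * α)
  calc (2:ℝ)^m * (volume J).toReal ≤ 2^m * (β - α) := by nlinarith
  _ ≤ (⌈(2:ℝ)^m * β⌉ - ⌊(2:ℝ)^m * α⌋ - 1) + 1 := by push_cast; nlinarith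
  _ ≤ (T.card : ℝ) + 1 := by linarith
  _ ≤ (Sgrid m J).card + 1 := by
      have : (T.card : ℝ) ≤ (Sgrid m J).card := by exact_mod_cast hcard
      linarith

lemma geom {m d : ℕ} (hm : 1 ≤ m) (hd : 1 ≤ d) (I : Fin d → Set ℝ)
    (hI : ∀ ℓ, IsIntervalIn01 (I ℓ))
    (hvol : ((2:ℝ)^m)⁻¹ < (volume (Set.pi Set.univ I)).toReal) :
    ∃ c ∈ Afin m d, ∀ x ∈ Cbox m c, x ∈ Set.pi Set.univ I := by
  have h2m : (0:ℝ) < 2^m := by positivity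
  set L : Fin d → ℝ := fun ℓ => (volume (I ℓ)).toReal with hL
  have hL0 : ∀ ℓ, 0 ≤ L ℓ := fun ℓ => ENNReal.toReal_nonneg
  have hprodvol : (volume (Set.pi Set.univ I)).toReal = ∏ ℓ, L ℓ := by
    rw [volume_pi_pi, ENNReal.toReal_prod]
  have hL1 : ∀ ℓ, L ℓ ≤ 1 := by
    intro ℓ
    have h1 : volume (I ℓ) ≤ volume (Set.Icc (0:ℝ) 1) := measure_mono (hI ℓ).1
    rw [Real.volume_Icc] at h1
    exact ENNReal.toReal_le_of_le_ofReal (by norm_num) (by simpa using h1)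
  have hprodL : ((2:ℝ)^m)⁻¹ < ∏ ℓ, L ℓ := by rw [← hprodvol]; exact hvol
  have hLlb : ∀ ℓ, ((2:ℝ)^m)⁻¹ < L ℓ := by
    intro ℓ
    have h1 : ∏ ℓ', L ℓ' = L ℓ * ∏ ℓ' ∈ univ.erase ℓ, L ℓ' :=
      (Finset.mul_prod_erase univ L (Finset.mem_univ ℓ)).symm
    have h2 : ∏ ℓ' ∈ univ.erase ℓ, L ℓ' ≤ 1 :=
      Finset.prod_le_one (fun ℓ' _ => hL0 ℓ') (fun ℓ' _ => hL1 ℓ')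
    have h3 : ∏ ℓ', L ℓ' ≤ L ℓ := by
      rw [h1]
      calc L ℓ * ∏ ℓ' ∈ univ.erase ℓ, L ℓ' ≤ L ℓ * 1 :=
            mul_le_mul_of_nonneg_left h2 (hL0 ℓ)
      _ = L ℓ := mul_one _
    linarith
  have hScard : ∀ ℓ, 2^m * L ℓ ≤ (Sgrid m (I ℓ)).card + 1 := fun ℓ => Sgrid_count (hI ℓ)
  have hSne : ∀ ℓ, (Sgrid m (I ℓ)).Nonempty := by
    intro ℓ
    rw [← Finset.card_pos]
    by_contra h
    push_neg at h
    have : (Sgrid m (I ℓ)).card = 0 := by omega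
    have h2 := hScard ℓ
    rw [this] at h2
    have h3 : (1:ℝ) < 2^m * L ℓ := by
      have h4 := mul_lt_mul_of_pos_left (hLlb ℓ) h2m
      rwa [mul_inv_cancel₀ (ne_of_gt h2m)] at h4
    norm_num at h2
    linarith
  set a : Fin d → ℕ := fun ℓ => (Sgrid m (I ℓ)).min' (hSne ℓ) with ha
  set b : Fin d → ℕ := fun ℓ => (Sgrid m (I ℓ)).max' (hSne ℓ) with hb
  have hab : ∀ ℓ, a ℓ ≤ b ℓ := fun ℓ => Finset.min'_le _ _ (Finset.max'_mem _ _)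
  have haS : ∀ ℓ, a ℓ ∈ Sgrid m (I ℓ) := fun ℓ => Finset.min'_mem _ _
  have hbS : ∀ ℓ, b ℓ ∈ Sgrid m (I ℓ) := fun ℓ => Finset.max'_mem _ _
  have hIccS : ∀ ℓ, Finset.Icc (a ℓ) (b ℓ) ⊆ Sgrid m (I ℓ) := by
    intro ℓ j hj
    rw [Finset.mem_Icc] at hj
    exact Sgrid_consec (hI ℓ) (haS ℓ) (hbS ℓ) hj.1 hj.2
  have hSIcc : ∀ ℓ, Sgrid m (I ℓ) = Finset.Icc (a ℓ) (b ℓ) := by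
    intro ℓ
    apply Finset.Subset.antisymm _ (hIccS ℓ)
    intro j hj
    rw [Finset.mem_Icc]
    exact ⟨Finset.min'_le _ _ hj, Finset.le_max' _ _ hj⟩
  have hcards : ∀ ℓ, (Sgrid m (I ℓ)).card = b ℓ - a ℓ + 1 := by
    intro ℓ
    rw [hSIcc ℓ, Nat.card_Icc]
    have := hab ℓ
    omega
  refine ⟨(a, b), ?_, ?_⟩
  · simp only [Afin, Finset.mem_filter, Finset.mem_product, Fintype.mem_piFinset]
    refine ⟨⟨fun ℓ => ?_, fun ℓ => ?_⟩, hab, ?_⟩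
    · have := haS ℓ; simp only [Sgrid, Finset.mem_filter] at this; exact this.1
    · have := hbS ℓ; simp only [Sgrid, Finset.mem_filter] at this; exact this.1
    · -- product bound
      have hreal : (2:ℝ)^(m*(d-1)) < ∏ ℓ, ((b ℓ - a ℓ + 2 : ℕ) : ℝ) := by
        have hterm : ∀ ℓ, 2^m * L ℓ ≤ ((b ℓ - a ℓ + 2 : ℕ) : ℝ) := by
          intro ℓ
          have h1 := hScard ℓ
          rw [hcards ℓ] at h1
          have : ((b ℓ - a ℓ + 2 : ℕ) : ℝ) = ((b ℓ - a ℓ + 1 : ℕ) : ℝ) + 1 := by push_cast; ring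
          rw [this]
          exact h1
        have hmd : m * d = m * (d-1) + m := by
          conv_lhs => rw [show d = (d-1)+1 by omega]
          rw [Nat.mul_add]; ring
        calc (2:ℝ)^(m*(d-1)) = (2^m)^d * ((2:ℝ)^m)⁻¹ := by
              rw [← pow_mul, hmd, pow_add, mul_assoc, mul_inv_cancel₀ (ne_of_gt h2m), mul_one]
        _ < (2^m)^d * ∏ ℓ, L ℓ := by
              apply mul_lt_mul_of_pos_left hprodL (by positivity)
        _ = ∏ ℓ, (2^m * L ℓ) := by
              rw [Finset.prod_mul_distrib, Finset.prod_const, Finset.card_univ, Fintype.card_fin]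
        _ ≤ ∏ ℓ, ((b ℓ - a ℓ + 2 : ℕ) : ℝ) := by
              apply Finset.prod_le_prod (fun ℓ _ => by positivity) (fun ℓ _ => hterm ℓ)
      exact_mod_cast hreal
  · intro x hx
    rw [Cbox, Fintype.mem_piFinset] at hx
    rw [Set.mem_univ_pi]
    intro ℓ
    obtain ⟨j, hj, hjx⟩ := Finset.mem_image.1 (hx ℓ)
    have hjS : j ∈ Sgrid m (I ℓ) := hIccS ℓ hj
    simp only [Sgrid, Finset.mem_filter] at hjS
    rw [← hjx]
    exact hjS.2


def Tfin (m d n : ℕ) : Finset (Fin n → (Fin d → ℝ)) :=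
  Fintype.piFinset fun _ : Fin n => Ggrid m d

lemma card_Tfin (m d n : ℕ) : (Tfin m d n).card = ((2^m - 1)^d)^n := by
  simp [Tfin, Fintype.card_piFinset, card_Ggrid]

def hits (m : ℕ) {d n : ℕ} (f : Fin n → (Fin d → ℝ)) (c : (Fin d → ℕ) × (Fin d → ℕ)) : ℕ :=
  (univ.filter fun i => f i ∈ Cbox m c).card

lemma badcount {m d n k : ℕ} (hkn : k ≤ n) {c : (Fin d → ℕ) × (Fin d → ℕ)}
    (hc : c ∈ Afin m d) :
    ((Tfin m d n).filter (fun f => hits m f c ≤ k)).card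
      ≤ n.choose k * ((2^m-1)^d)^k * ((2^m-1)^d - (Cbox m c).card)^(n-k) := by
  classical
  set N := (2^m-1)^d with hN
  set cc := (Cbox m c).card with hcc
  have hsub : (Tfin m d n).filter (fun f => hits m f c ≤ k) ⊆
      (Finset.powersetCard k (univ : Finset (Fin n))).biUnion (fun s =>
        Fintype.piFinset (fun i => if i ∈ s then Ggrid m d else Ggrid m d \ Cbox m c)) := by
    intro f hf
    rw [Finset.mem_filter] at hf
    obtain ⟨hfT, hfk⟩ := hf
    obtain ⟨s, hs1, hs2, hs3⟩ := Finset.exists_subsuperset_card_eq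
      (Finset.subset_univ (univ.filter fun i => f i ∈ Cbox m c)) hfk
      (by rw [Finset.card_univ, Fintype.card_fin]; exact hkn)
    rw [Finset.mem_biUnion]
    refine ⟨s, Finset.mem_powersetCard.2 ⟨hs2, hs3⟩, ?_⟩
    rw [Fintype.mem_piFinset]
    intro i
    by_cases his : i ∈ s
    · rw [if_pos his]
      exact Fintype.mem_piFinset.1 hfT i
    · rw [if_neg his]
      rw [Finset.mem_sdiff]
      refine ⟨Fintype.mem_piFinset.1 hfT i, fun hmem => ?_⟩
      exact his (hs1 (Finset.mem_filter.2 ⟨Finset.mem_univ i, hmem⟩))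
  calc ((Tfin m d n).filter (fun f => hits m f c ≤ k)).card
      ≤ ((Finset.powersetCard k (univ : Finset (Fin n))).biUnion (fun s =>
        Fintype.piFinset (fun i => if i ∈ s then Ggrid m d else Ggrid m d \ Cbox m c))).card :=
        Finset.card_le_card hsub
  _ ≤ ∑ s ∈ Finset.powersetCard k (univ : Finset (Fin n)),
        (Fintype.piFinset (fun i => if i ∈ s then Ggrid m d else Ggrid m d \ Cbox m c)).card :=
        Finset.card_biUnion_le
  _ ≤ ∑ _s ∈ Finset.powersetCard k (univ : Finset (Fin n)), N^k * (N - cc)^(n-k) := by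
      apply Finset.sum_le_sum
      intro s hs
      rw [Finset.mem_powersetCard] at hs
      rw [Fintype.card_piFinset]
      apply le_of_eq
      have hcard : ∀ i : Fin n,
          (if i ∈ s then Ggrid m d else Ggrid m d \ Cbox m c).card
          = (if i ∈ s then N else N - cc) := by
        intro i
        by_cases his : i ∈ s
        · rw [if_pos his, if_pos his, card_Ggrid]
        · rw [if_neg his, if_neg his, Finset.card_sdiff_of_subset (Cbox_subset hc), card_Ggrid]
      calc ∏ i, (if i ∈ s then Ggrid m d else Ggrid m d \ Cbox m c).card
          = ∏ i, (if i ∈ s then N else N - cc) := Finset.prod_congr rfl fun i _ => hcard i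
      _ = N^k * (N - cc)^(n-k) := by
          rw [← Finset.prod_sdiff (Finset.subset_univ s)]
          have e1 : ∏ i ∈ s, (if i ∈ s then N else N - cc) = N ^ k := by
            rw [Finset.prod_congr rfl (fun i hi => if_pos hi), Finset.prod_const, hs.2]
          have e2 : ∏ i ∈ univ \ s, (if i ∈ s then N else N - cc) = (N - cc) ^ (n - k) := by
            rw [Finset.prod_congr rfl (fun i hi => if_neg (Finset.mem_sdiff.1 hi).2),
              Finset.prod_const, Finset.card_sdiff_of_subset (Finset.subset_univ s),
              Finset.card_univ, Fintype.card_fin, hs.2]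
          rw [e1, e2, mul_comm]
  _ = n.choose k * (N^k * (N - cc)^(n-k)) := by
      rw [Finset.sum_const, Finset.card_powersetCard, Finset.card_univ, Fintype.card_fin,
        smul_eq_mul]
  _ = n.choose k * N^k * (N - cc)^(n-k) := by ring

lemma cbox_lower {m d : ℕ} (hm : 1 ≤ m) (hd : 1 ≤ d) {c : (Fin d → ℕ) × (Fin d → ℕ)}
    (hc : c ∈ Afin m d) :
    ((((2:ℕ)^m - 1)^d : ℕ) : ℝ) ≤ 8 * 2^m * ((Cbox m c).card : ℝ) := by
  have h2m : 2 ≤ 2 ^ m := by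
    calc 2 = 2^1 := rfl
    _ ≤ 2 ^ m := Nat.pow_le_pow_right (by norm_num) hm
  set u : Fin d → ℝ := fun ℓ => ((c.2 ℓ - c.1 ℓ : ℕ) : ℝ) + 2 with hu
  have hu2 : ∀ ℓ, 2 ≤ u ℓ := fun ℓ => by
    have : (0:ℝ) ≤ ((c.2 ℓ - c.1 ℓ : ℕ) : ℝ) := Nat.cast_nonneg _
    rw [hu]; dsimp only; linarith
  have hub : ∀ ℓ, u ℓ ≤ 2 ^ m := by
    intro ℓ
    obtain ⟨ha, hab, hb⟩ := mem_Afin_ranges hc ℓ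
    rw [hu]; dsimp only
    have h' : (c.2 ℓ - c.1 ℓ : ℕ) + 2 ≤ 2 ^ m := by omega
    calc ((c.2 ℓ - c.1 ℓ : ℕ) : ℝ) + 2 = (((c.2 ℓ - c.1 ℓ) + 2 : ℕ) : ℝ) := by push_cast; ring
    _ ≤ ((2^m : ℕ) : ℝ) := by exact_mod_cast h'
    _ = (2:ℝ)^m := by push_cast; ring
  have hprod : (2:ℝ) ^ (m * (d-1)) ≤ ∏ ℓ, u ℓ := by
    have hn : 2 ^ (m * (d - 1)) ≤ ∏ ℓ, (c.2 ℓ - c.1 ℓ + 2) := by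
      simp only [Afin, Finset.mem_filter] at hc
      exact le_of_lt hc.2.2
    calc (2:ℝ) ^ (m * (d-1)) = ((2 ^ (m * (d-1)) : ℕ) : ℝ) := by push_cast; ring
    _ ≤ ((∏ ℓ, (c.2 ℓ - c.1 ℓ + 2) : ℕ) : ℝ) := by exact_mod_cast hn
    _ = ∏ ℓ, u ℓ := by
        rw [Nat.cast_prod]
        refine Finset.prod_congr rfl fun ℓ _ => ?_
        simp only [hu]; push_cast; ring
  have hdens := density hd u hu2 hub hprod
  have hcards : ((Cbox m c).card : ℝ) = ∏ ℓ, (u ℓ - 1) := by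
    rw [card_Cbox hc, Nat.cast_prod]
    refine Finset.prod_congr rfl fun ℓ _ => ?_
    simp only [hu]; push_cast; ring
  have hNcast : ((((2:ℕ)^m - 1)^d : ℕ) : ℝ) = ((2:ℝ)^m - 1)^d := by
    have h1 : (1:ℕ) ≤ 2^m := by omega
    push_cast [h1]
    ring
  rw [hNcast, hcards]
  exact hdens

lemma core {m d n k : ℕ} (hm : 1 ≤ m) (hd : 1 ≤ d) (hk : 1 ≤ k) (hkn : 2 * k < n)
    (hcond : (n : ℝ) / 2 ^ (m + 4) ≥
      m * 2 ^ m * Real.log (2 ^ (m + 3) * d) +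
        Real.log (2 * (n : ℝ) ^ k / (Nat.factorial (k - 1)))) :
    ((Afin m d).card : ℝ) * (n.choose k) * (1 - ((2:ℝ)^(m+3))⁻¹)^(n-k) < 1 := by
  set p0 : ℝ := ((2:ℝ)^(m+3))⁻¹ with hp0
  set K : ℝ := (2:ℝ)^(m+3) * d with hK
  set M : ℕ := m * 2^m with hM
  set Z : ℝ := 2 * (n : ℝ) ^ k / (Nat.factorial (k - 1)) with hZ
  have hn1 : 1 ≤ n := by omega
  have hkln : k < n := by omega
  have hdpos : (0:ℝ) < d := by exact_mod_cast hd
  have hBpos : (0:ℝ) < (2:ℝ)^(m+3) := by positivity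
  have hKpos : (0:ℝ) < K := by rw [hK]; positivity
  have hK1 : (1:ℝ) ≤ K := by
    rw [hK]
    have h1 : (1:ℝ) ≤ (2:ℝ)^(m+3) := one_le_pow₀ one_le_two
    have h2 : (1:ℝ) ≤ (d:ℝ) := by exact_mod_cast hd
    nlinarith
  have hp0pos : (0:ℝ) < p0 := by rw [hp0]; positivity
  have hp0lt : p0 < 1 := by
    rw [hp0]
    have h2 : (1:ℝ) < (2:ℝ)^(m+3) := by
      calc (1:ℝ) < 2 := one_lt_two
      _ ≤ (2:ℝ)^(m+3) := by
          calc (2:ℝ) = 2^1 := (pow_one 2).symm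
          _ ≤ 2^(m+3) := pow_le_pow_right₀ one_le_two (by omega)
    exact inv_lt_one_of_one_lt₀ h2
  have hnr : (0:ℝ) < (n:ℝ) := by exact_mod_cast hn1
  have hnpk : (0:ℝ) < (n:ℝ)^k := pow_pos hnr k
  have hZpos : (0:ℝ) < Z := by
    rw [hZ]
    apply div_pos (by linarith) (by positivity)
  have hA := card_Afin_le (m := m) (d := d) hm hd
  have hBchoose : (n.choose k : ℝ) ≤ (n:ℝ)^k / (Nat.factorial k) := by
    rw [le_div_iff₀ (by positivity : (0:ℝ) < (Nat.factorial k : ℝ))]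
    have h2 := Nat.descFactorial_le_pow n k
    rw [Nat.descFactorial_eq_factorial_mul_choose] at h2
    have h3 : n.choose k * Nat.factorial k ≤ n ^ k := by
      rw [mul_comm]; exact h2
    exact_mod_cast h3
  -- step C
  have hC : (1 - p0)^(n-k) < Real.exp (-((n:ℝ)/2^(m+4))) := by
    have h1 : 1 - p0 < Real.exp (-p0) := by
      have := Real.add_one_lt_exp (x := -p0) (by intro h; rw [neg_eq_zero] at h; exact (ne_of_gt hp0pos) h)
      linarith
    have h2 : (1 - p0)^(n-k) < Real.exp (-p0)^(n-k) := by
      apply pow_lt_pow_left₀ h1 (by linarith) (by omega)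
    have h3 : Real.exp (-p0)^(n-k) = Real.exp (-(((n-k : ℕ):ℝ) * p0)) := by
      rw [← Real.exp_nat_mul]
      congr 1
      ring
    have h4 : (n:ℝ)/2^(m+4) < ((n-k:ℕ):ℝ) * p0 := by
      have hc1 : ((n-k:ℕ):ℝ) = (n:ℝ) - k := by
        have : k ≤ n := le_of_lt hkln
        push_cast [this]
        ring
      have hpow : (2:ℝ)^(m+4) = 2 * 2^(m+3) := by
        rw [pow_succ]; ring
      rw [hc1, hp0, hpow, ← div_eq_mul_inv, div_lt_div_iff₀ (by positivity) hBpos]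
      have hkr : 2*(k:ℝ) < n := by exact_mod_cast hkn
      nlinarith
    calc (1 - p0)^(n-k) < Real.exp (-(((n-k : ℕ):ℝ) * p0)) := by rw [← h3]; exact h2
    _ ≤ Real.exp (-((n:ℝ)/2^(m+4))) := by
        apply Real.exp_le_exp.2
        linarith
  -- step D
  have hD : Real.exp (-((n:ℝ)/2^(m+4))) ≤ (K^M)⁻¹ * Z⁻¹ := by
    have h1 : (M:ℝ) * Real.log K + Real.log Z ≤ (n:ℝ)/2^(m+4) := by
      rw [hK, hZ, hM]
      push_cast
      exact hcond
    calc Real.exp (-((n:ℝ)/2^(m+4))) ≤ Real.exp (-((M:ℝ) * Real.log K + Real.log Z)) := by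
          apply Real.exp_le_exp.2; linarith
    _ = (Real.exp ((M:ℝ) * Real.log K))⁻¹ * (Real.exp (Real.log Z))⁻¹ := by
        rw [neg_add, Real.exp_add, Real.exp_neg, Real.exp_neg]
    _ = (K^M)⁻¹ * Z⁻¹ := by
        rw [Real.exp_nat_mul, Real.exp_log hKpos, Real.exp_log hZpos]
  have hfactk : (Nat.factorial k : ℝ) = k * (Nat.factorial (k-1)) := by
    have he : k = (k-1) + 1 := by omega
    rw [he, Nat.factorial_succ]
    push_cast
    ring_nf
  -- assembly
  have hP0 : (0:ℝ) ≤ (1 - p0)^(n-k) := pow_nonneg (by linarith) _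
  have h2K : (0:ℝ) < 2 * K^M * ((n:ℝ)^k / (Nat.factorial k)) :=
    mul_pos (mul_pos two_pos (by positivity)) (div_pos hnpk (by positivity))
  calc ((Afin m d).card : ℝ) * (n.choose k) * (1 - p0)^(n-k)
      ≤ (2 * K^M) * ((n:ℝ)^k / (Nat.factorial k)) * (1 - p0)^(n-k) := by
        apply mul_le_mul_of_nonneg_right _ hP0
        apply mul_le_mul hA hBchoose (Nat.cast_nonneg _) (by positivity)
  _ < (2 * K^M) * ((n:ℝ)^k / (Nat.factorial k)) * ((K^M)⁻¹ * Z⁻¹) := by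
        apply mul_lt_mul_of_pos_left _ (by rw [mul_assoc]; rw [mul_assoc] at h2K; exact h2K)
        exact lt_of_lt_of_le hC hD
  _ = ((Nat.factorial (k-1) : ℝ)) / (Nat.factorial k) := by
        rw [hZ]
        have hKM : K^M ≠ 0 := by positivity
        have hfk : (Nat.factorial k : ℝ) ≠ 0 := by positivity
        have hfk1 : (Nat.factorial (k-1) : ℝ) ≠ 0 := by positivity
        field_simp
  _ = (k:ℝ)⁻¹ := by
        rw [hfactk]
        have hkne : (k:ℝ) ≠ 0 := by
          have : (0:ℝ) < k := by exact_mod_cast hk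
          exact ne_of_gt this
        have hfk1 : (Nat.factorial (k-1) : ℝ) ≠ 0 := by positivity
        field_simp
  _ ≤ 1 := by
        have hkr : (1:ℝ) ≤ k := by exact_mod_cast hk
        rw [inv_le_one_iff₀]
        right; exact hkr

lemma exists_good {m d n k : ℕ} (hm : 1 ≤ m) (hd : 1 ≤ d) (hk : 1 ≤ k) (hkn : 2 * k < n)
    (hcond : (n : ℝ) / 2 ^ (m + 4) ≥
      m * 2 ^ m * Real.log (2 ^ (m + 3) * d) +
        Real.log (2 * (n : ℝ) ^ k / (Nat.factorial (k - 1)))) :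
    ∃ f ∈ Tfin m d n, ∀ c ∈ Afin m d, k < hits m f c := by
  classical
  set N : ℕ := (2^m - 1)^d with hN
  have h2m : 2 ≤ 2^m := by
    calc 2 = 2^1 := rfl
    _ ≤ 2^m := Nat.pow_le_pow_right (by norm_num) hm
  have hN1 : 1 ≤ N := Nat.one_le_pow _ _ (by omega)
  set p0 : ℝ := ((2:ℝ)^(m+3))⁻¹ with hp0
  have hp0pos : (0:ℝ) < p0 := by rw [hp0]; positivity
  set U := (Afin m d).biUnion (fun c => (Tfin m d n).filter (fun f => hits m f c ≤ k)) with hU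
  have hUsub : U ⊆ Tfin m d n := Finset.biUnion_subset.2 (fun c _ => Finset.filter_subset _ _)
  have hNposR : (0:ℝ) < (N:ℝ) := by exact_mod_cast hN1
  have hkn' : k ≤ n := by omega
  have key : ∀ c ∈ Afin m d, (((Tfin m d n).filter (fun f => hits m f c ≤ k)).card : ℝ)
      ≤ (n.choose k : ℝ) * (N:ℝ)^k * ((1 - p0) * N)^(n-k) := by
    intro c hc
    have h1 := badcount (n := n) hkn' hc
    have hccle : (Cbox m c).card ≤ N := by
      rw [hN, ← card_Ggrid m d]
      exact Finset.card_le_card (Cbox_subset hc)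
    have h2 : ((N - (Cbox m c).card : ℕ) : ℝ) ≤ (1 - p0) * N := by
      have hc1 := cbox_lower hm hd hc
      have hcast : ((N - (Cbox m c).card : ℕ) : ℝ) = (N:ℝ) - ((Cbox m c).card : ℝ) := by
        push_cast [hccle]
        ring
      rw [hcast]
      have h83 : 8 * (2:ℝ)^m = 2^(m+3) := by rw [pow_add]; ring
      have h3 : p0 * (N:ℝ) ≤ ((Cbox m c).card : ℝ) := by
        rw [hp0, inv_mul_le_iff₀ (by positivity : (0:ℝ) < (2:ℝ)^(m+3))]
        calc (N:ℝ) ≤ 8 * 2^m * ((Cbox m c).card : ℝ) := hc1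
        _ = 2^(m+3) * ((Cbox m c).card : ℝ) := by rw [h83]
      nlinarith
    calc (((Tfin m d n).filter (fun f => hits m f c ≤ k)).card : ℝ)
        ≤ ((n.choose k * N^k * (N - (Cbox m c).card)^(n-k) : ℕ) : ℝ) := by exact_mod_cast h1
    _ = (n.choose k : ℝ) * (N:ℝ)^k * (((N - (Cbox m c).card : ℕ)):ℝ)^(n-k) := by push_cast; ring
    _ ≤ (n.choose k : ℝ) * (N:ℝ)^k * ((1 - p0) * N)^(n-k) := by
        apply mul_le_mul_of_nonneg_left _ (by positivity)
        exact pow_le_pow_left₀ (Nat.cast_nonneg _) h2 _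
  have hUcard : ((U.card : ℕ) : ℝ) < (((Tfin m d n).card : ℕ) : ℝ) := by
    have h0 : U.card ≤ ∑ c ∈ Afin m d, ((Tfin m d n).filter (fun f => hits m f c ≤ k)).card :=
      Finset.card_biUnion_le
    have e1 : ((1 - p0) * (N:ℝ))^(n-k) = (1-p0)^(n-k) * (N:ℝ)^(n-k) := mul_pow _ _ _
    have e2 : (N:ℝ)^k * (N:ℝ)^(n-k) = (N:ℝ)^n := by
      rw [← pow_add]
      congr 1
      omega
    have hcore := core hm hd hk hkn hcond
    calc ((U.card : ℕ) : ℝ)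
        ≤ ((∑ c ∈ Afin m d, ((Tfin m d n).filter (fun f => hits m f c ≤ k)).card : ℕ) : ℝ) := by
          exact_mod_cast h0
    _ = ∑ c ∈ Afin m d, (((Tfin m d n).filter (fun f => hits m f c ≤ k)).card : ℝ) := by push_cast; ring
    _ ≤ ∑ _c ∈ Afin m d, (n.choose k : ℝ) * (N:ℝ)^k * ((1 - p0) * N)^(n-k) :=
          Finset.sum_le_sum key
    _ = ((Afin m d).card : ℝ) * ((n.choose k : ℝ) * (N:ℝ)^k * ((1 - p0) * N)^(n-k)) := by
          rw [Finset.sum_const, nsmul_eq_mul]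
    _ = (((Afin m d).card : ℝ) * (n.choose k : ℝ) * (1-p0)^(n-k)) * ((N:ℝ)^k * (N:ℝ)^(n-k)) := by
          rw [e1]; ring
    _ = (((Afin m d).card : ℝ) * (n.choose k : ℝ) * (1-p0)^(n-k)) * (N:ℝ)^n := by rw [e2]
    _ < 1 * (N:ℝ)^n := by
          apply mul_lt_mul_of_pos_right hcore (by positivity)
    _ = (((Tfin m d n).card : ℕ) : ℝ) := by
          rw [one_mul, card_Tfin]
          push_cast
          rw [hN]
          push_cast
          ring
  have hUlt : U.card < (Tfin m d n).card := by exact_mod_cast hUcard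
  have hne : (Tfin m d n \ U).Nonempty := by
    rw [← Finset.card_pos, Finset.card_sdiff_of_subset hUsub]
    omega
  obtain ⟨f, hf⟩ := hne
  rw [Finset.mem_sdiff] at hf
  refine ⟨f, hf.1, fun c hc => ?_⟩
  by_contra h
  push_neg at h
  exact hf.2 (Finset.mem_biUnion.2 ⟨c, hc, Finset.mem_filter.2 ⟨hf.1, h⟩⟩)

end S8

/-- If `n · 2^{-m-4} ≥ m · 2^m · log(2^{m+3} d) + log(2 n^k/(k-1)!)` (with `1 ≤ k < n/2`),
then there exists a multiset `𝕏 ⊆ 𝕄_m^d` of cardinality `n` such that every axis-parallel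
box `B ⊆ [0,1]^d` with `vol_d(B) > 2^{-m}` contains more than `k` points of `𝕏`; in
particular `k-dispₘ(𝕏,d) ≤ 2^{-m}`. -/
theorem statement_8 (m d n k : ℕ) (hm : 1 ≤ m) (hd : 1 ≤ d) (hk : 1 ≤ k) (hkn : 2 * k < n)
    (hcond : (n : ℝ) / 2 ^ (m + 4) ≥
      m * 2 ^ m * Real.log (2 ^ (m + 3) * d) +
        Real.log (2 * (n : ℝ) ^ k / (Nat.factorial (k - 1)))) :
    ∃ X : Multiset (Fin d → ℝ), Multiset.card X = n ∧ (∀ x ∈ X, x ∈ Ggrid m d) ∧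
      (∀ I : Fin d → Set ℝ, (∀ ℓ, IsIntervalIn01 (I ℓ)) →
        ((2:ℝ) ^ m)⁻¹ < (volume (Set.pi Set.univ I)).toReal →
        k < Multiset.card (X.filter fun x => x ∈ Set.pi Set.univ I)) ∧
      kdispM d k X ≤ ((2:ℝ) ^ m)⁻¹ := by
  classical
  obtain ⟨f, hfT, hfgood⟩ := S8.exists_good hm hd hk hkn hcond
  refine ⟨Multiset.map f (Finset.univ : Finset (Fin n)).val, ?_, ?_, ?_, ?_⟩
  · rw [Multiset.card_map]
    exact Finset.card_univ.trans (Fintype.card_fin n)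
  · intro x hx
    rw [Multiset.mem_map] at hx
    obtain ⟨i, _, rfl⟩ := hx
    exact Fintype.mem_piFinset.1 hfT i
  · intro I hI hvol
    obtain ⟨c, hcA, hcsub⟩ := S8.geom hm hd I hI hvol
    have h1 := hfgood c hcA
    have h2 : S8.hits m f c ≤ (Finset.univ.filter (fun i => f i ∈ Set.pi Set.univ I)).card := by
      apply Finset.card_le_card
      intro i hi
      rw [Finset.mem_filter] at hi ⊢
      exact ⟨hi.1, hcsub _ hi.2⟩
    have h3 : Multiset.card ((Multiset.map f (Finset.univ : Finset (Fin n)).val).filter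
        (fun x => x ∈ Set.pi Set.univ I))
        = (Finset.univ.filter (fun i => f i ∈ Set.pi Set.univ I)).card := by
      rw [Multiset.filter_map, Multiset.card_map]
      rfl
    rw [h3]
    exact lt_of_lt_of_le h1 h2
  · -- kdispM bound
    apply csSup_le
    · refine ⟨0, (fun _ => 0), (fun _ => 0), fun i => ⟨le_refl 0, le_refl 0, zero_le_one⟩, ?_, ?_⟩
      · have hfe : Multiset.filter (fun x => ∀ i, x i ∈ Set.Ioo (0:ℝ) 0)
            (Multiset.map f (Finset.univ : Finset (Fin n)).val) = 0 := by
          rw [Multiset.filter_eq_nil]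
          intro x _ hx
          have := hx ⟨0, hd⟩
          rw [Set.mem_Ioo] at this
          linarith [this.1, this.2]
        rw [hfe]
        simp
      · rw [Finset.prod_const]
        simp only [sub_zero]
        rw [zero_pow]
        · simp [Finset.card_univ]
          omega
    · rintro v ⟨a, b, hab, hcnt, rfl⟩
      by_contra hgt
      push_neg at hgt
      set I : Fin d → Set ℝ := fun i => Set.Ioo (a i) (b i) with hI
      have hII : ∀ i, IsIntervalIn01 (I i) := by
        intro i
        constructor
        · intro x hx
          rw [hI] at hx
          exact ⟨le_trans (hab i).1 hx.1.le, le_trans hx.2.le (hab i).2.2⟩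
        · rw [hI]; exact Set.ordConnected_Ioo
      have hvol : ((2:ℝ) ^ m)⁻¹ < (volume (Set.pi Set.univ I)).toReal := by
        rw [volume_pi_pi, ENNReal.toReal_prod]
        have he : ∀ i, ((volume (I i)).toReal) = b i - a i := by
          intro i
          rw [hI]
          simp only
          rw [Real.volume_Ioo, ENNReal.toReal_ofReal (by linarith [(hab i).2.1])]
        calc ((2:ℝ) ^ m)⁻¹ < ∏ i, (b i - a i) := hgt
        _ = ∏ i, ((volume (I i)).toReal) := Finset.prod_congr rfl fun i _ => (he i).symm
      obtain ⟨c, hcA, hcsub⟩ := S8.geom hm hd I hII hvol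
      have h1 := hfgood c hcA
      have h2 : S8.hits m f c ≤ (Finset.univ.filter (fun i => f i ∈ Set.pi Set.univ I)).card := by
        apply Finset.card_le_card
        intro i hi
        rw [Finset.mem_filter] at hi ⊢
        exact ⟨hi.1, hcsub _ hi.2⟩
      have h3 : Multiset.card ((Multiset.map f (Finset.univ : Finset (Fin n)).val).filter
          (fun x => x ∈ Set.pi Set.univ I))
          = (Finset.univ.filter (fun i => f i ∈ Set.pi Set.univ I)).card := by
        rw [Multiset.filter_map, Multiset.card_map]
        rfl
      have h4 : Multiset.filter (fun x => ∀ i, x i ∈ Set.Ioo (a i) (b i))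
          (Multiset.map f (Finset.univ : Finset (Fin n)).val)
          = Multiset.filter (fun x => x ∈ Set.pi Set.univ I)
            (Multiset.map f (Finset.univ : Finset (Fin n)).val) := by
        apply Multiset.filter_congr
        intro x _
        rw [hI, Set.mem_univ_pi]
      rw [h4, h3] at hcnt
      have : k < k := lt_of_lt_of_le (lt_of_lt_of_le h1 h2) hcnt
      omega
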